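/- Let α > β > γ > 0 be reals, δ ∈ (0,π), ε = 1/√(cos(δ/2)), f₁(m) = ε√(α−γ)·sin(δm/2), h₁(m) = ε√(α−γ)·cos(δm/2), f₂(m) = ε√(α−γ)·cos(δm/2), h₂(m) = ε√(α−γ)·sin(δm/2), and let g₁, g₂ : ℤ → ℝ satisfy g₁(m)g₁(m+1) = (α−β) − f₁(m)f₁(m+1) and g₂(m)g₂(m+1) = f₂(m)f₂(m+1) − (α−β) for all m ∈ ℤ. Let r = (x,y,z) be the associated discrete ellipsoid binet. Fix a sign σ ∈ {1,−1} and k ∈ ℤ with sin(δk/2) ≠ 0. Then the polar planes of the ellipsoid x²/α + y²/β + z²/γ = 1 at the vertices along the diagonal polygon m₁ + σm₂ = k have a common point: there exists p = (p₁,p₂,p₃) ∈ ℝ³ such that for every m ∈ ℤ, writing v(m) = (x(m,σ(k−m)), y(m,σ(k−m)), z(m,σ(k−m))), one has p₁·x(m,σ(k−m))/α + p₂·y(m,σ(k−m))/β + p₃·z(m,σ(k−m))/γ = 1. -/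

import Mathlib

open Real

theorem polar_planes_along_discrete_circle_concurrent
    (α β γ : ℝ) (hαβ : β < α) (hβγ : γ < β) (hγ : 0 < γ)
    (δ : ℝ) (hδ : δ ∈ Set.Ioo 0 Real.pi)
    (ε : ℝ) (hεdef : ε = 1 / Real.sqrt (Real.cos (δ / 2)))
    (f₁ h₁ f₂ h₂ : ℤ → ℝ)
    (hf₁ : ∀ m : ℤ, f₁ m = ε * Real.sqrt (α - γ) * Real.sin (δ * m / 2))
    (hh₁ : ∀ m : ℤ, h₁ m = ε * Real.sqrt (α - γ) * Real.cos (δ * m / 2))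
    (hf₂ : ∀ m : ℤ, f₂ m = ε * Real.sqrt (α - γ) * Real.cos (δ * m / 2))
    (hh₂ : ∀ m : ℤ, h₂ m = ε * Real.sqrt (α - γ) * Real.sin (δ * m / 2))
    (g₁ g₂ : ℤ → ℝ)
    (hg₁ : ∀ m : ℤ, g₁ m * g₁ (m + 1) = (α - β) - f₁ m * f₁ (m + 1))
    (hg₂ : ∀ m : ℤ, g₂ m * g₂ (m + 1) = f₂ m * f₂ (m + 1) - (α - β))
    (x y z : ℤ → ℤ → ℝ)
    (hx : ∀ m₁ m₂ : ℤ, x m₁ m₂ = Real.sqrt (α / ((α - β) * (α - γ))) * f₁ m₁ * f₂ m₂)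
    (hy : ∀ m₁ m₂ : ℤ, y m₁ m₂ = Real.sqrt (β / ((α - β) * (β - γ))) * g₁ m₁ * g₂ m₂)
    (hz : ∀ m₁ m₂ : ℤ, z m₁ m₂ = Real.sqrt (γ / ((α - γ) * (β - γ))) * h₁ m₁ * h₂ m₂)
    (σ : ℤ) (hσ : σ = 1 ∨ σ = -1) (k : ℤ)
    (hk : Real.sin (δ * k / 2) ≠ 0) :
    ∃ p₁ p₂ p₃ : ℝ, ∀ m : ℤ,
      p₁ * x m (σ * (k - m)) / α + p₂ * y m (σ * (k - m)) / β
        + p₃ * z m (σ * (k - m)) / γ = 1 := by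
  obtain ⟨hδ0, hδπ⟩ := hδ
  have hα : (0:ℝ) < α := lt_trans hγ (lt_trans hβγ hαβ)
  have hαγ : (0:ℝ) < α - γ := by linarith
  have hαβ' : (0:ℝ) < α - β := by linarith
  have hβγ' : (0:ℝ) < β - γ := by linarith
  have hcos : 0 < Real.cos (δ / 2) := by
    apply Real.cos_pos_of_mem_Ioo
    constructor <;> [linarith [Real.pi_pos]; linarith]
  have hε : 0 < ε := by
    rw [hεdef]; positivity
  have hS : ε * Real.sqrt (α - γ) ≠ 0 := by positivity
  have hCx : (0:ℝ) < Real.sqrt (α / ((α - β) * (α - γ))) := by positivity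
  have hCz : (0:ℝ) < Real.sqrt (γ / ((α - γ) * (β - γ))) := by positivity
  set Cx := Real.sqrt (α / ((α - β) * (α - γ)))
  set Cz := Real.sqrt (γ / ((α - γ) * (β - γ)))
  set S := ε * Real.sqrt (α - γ) with hSdef
  set s := Real.sin (δ * k / 2) with hsdef
  refine ⟨α / (Cx * S^2 * s), 0, (σ : ℝ) * γ / (Cz * S^2 * s), ?_⟩
  intro m
  have key : Real.sin (δ * m / 2) * Real.cos (δ * (k - m) / 2)
      + Real.cos (δ * m / 2) * Real.sin (δ * (k - m) / 2) = s := by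
    rw [hsdef, ← Real.sin_add]
    ring_nf
  rcases hσ with h | h <;> subst h
  · rw [hx, hy, hz, hf₁ m, hf₂ (1 * (k - m)), hh₁ m, hh₂ (1 * (k - m))]
    have e1 : ((1 * (k - m) : ℤ) : ℝ) = (k - m : ℝ) := by push_cast; ring
    rw [e1]
    field_simp
    linear_combination key
  · rw [hx, hy, hz, hf₁ m, hf₂ (-1 * (k - m)), hh₁ m, hh₂ (-1 * (k - m))]
    have e1 : ((-1 * (k - m) : ℤ) : ℝ) = -(k - m : ℝ) := by push_cast; ring
    rw [e1]
    rw [show δ * -(k - m : ℝ) / 2 = -(δ * (k - m) / 2) by ring, Real.cos_neg, Real.sin_neg]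
    field_simp
    linear_combination key
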